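/- Let k be an odd positive integer, κ ≥ 0, s ≥ 0 integers, and suppose (√2)^κ · ((√6+√2)/2)^{k−2s} = 2cos(mπ/12) for some integer m. Then κ = 0 and k − 2s = ±1. -/
import Mathlib


open Real



private def ab : ℕ → ℕ × ℕ
  | 0 => (1, 0)
  | t+1 => (2 * (ab t).1 + 3 * (ab t).2, (ab t).1 + 2 * (ab t).2)

private lemma sqrt3_sq : Real.sqrt 3 ^ 2 = 3 := Real.sq_sqrt (by norm_num)

private lemma ab_pos : ∀ t, 1 ≤ (ab t).1
  | 0 => le_refl 1
  | t+1 => by have := ab_pos t; simp only [ab]; omega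

private lemma ab_b : ∀ t, t ≤ (ab t).2
  | 0 => le_refl 0
  | t+1 => by have h1 := ab_pos t; have h2 := ab_b t; simp only [ab]; omega

private lemma pow_pos_eq : ∀ t, (2 + Real.sqrt 3)^t = (ab t).1 + (ab t).2 * Real.sqrt 3
  | 0 => by simp [ab]
  | t+1 => by
    have ih := pow_pos_eq t
    have h3 := sqrt3_sq
    simp only [ab, pow_succ]
    push_cast
    linear_combination (2 + Real.sqrt 3) * ih + ((ab t).2 : ℝ) * h3

private lemma pow_neg_eq : ∀ t, (2 - Real.sqrt 3)^t = (ab t).1 - (ab t).2 * Real.sqrt 3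
  | 0 => by simp [ab]
  | t+1 => by
    have ih := pow_neg_eq t
    have h3 := sqrt3_sq
    simp only [ab, pow_succ]
    push_cast
    linear_combination (2 - Real.sqrt 3) * ih + ((ab t).2 : ℝ) * h3

private lemma int_sqrt3 (z w : ℤ) (h : (z : ℝ) * Real.sqrt 3 = w) : z = 0 ∧ w = 0 := by
  by_cases hz : z = 0
  · subst hz; simp at h; exact ⟨rfl, by exact_mod_cast h.symm⟩
  · exfalso
    have h3 : Irrational (Real.sqrt 3) := by
      simpa using Nat.prime_three.irrational_sqrt
    apply h3
    refine ⟨(w : ℚ) / (z : ℚ), ?_⟩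
    have hz' : (z:ℝ) ≠ 0 := Int.cast_ne_zero.mpr hz
    push_cast
    field_simp
    linarith [h]

private lemma cos_cases (m : ℤ) : ∃ u v : ℤ,
    2 + 2 * Real.cos (m * Real.pi / 6) = u + v * Real.sqrt 3 ∧
    ((u = 2 ∧ v = 1) ∨ (u = 2 ∧ v = -1) ∨ v = 0) := by
  obtain ⟨q, r, hr0, hr12, hm⟩ : ∃ q r : ℤ, 0 ≤ r ∧ r < 12 ∧ m = 12 * q + r :=
    ⟨m / 12, m % 12, by omega, by omega, by omega⟩
  have key : (m:ℝ) * π / 6 = (r:ℝ) * π / 6 + (q:ℝ) * (2 * π) := by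
    rw [hm]; push_cast; ring
  rw [key, Real.cos_add_int_mul_two_pi]
  have c1 : Real.cos (π/6) = Real.sqrt 3 / 2 := Real.cos_pi_div_six
  have c2 : Real.cos (π/3) = 1/2 := Real.cos_pi_div_three
  have cps : ∀ x : ℝ, Real.cos (π + x) = -Real.cos x := by
    intro x; rw [add_comm, Real.cos_add_pi]
  interval_cases r
  · refine ⟨4, 0, ?_, by norm_num⟩
    norm_num
  · refine ⟨2, 1, ?_, by norm_num⟩
    rw [show ((1:ℤ):ℝ) * π / 6 = π/6 by norm_num, c1]; push_cast; ring
  · refine ⟨3, 0, ?_, by norm_num⟩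
    rw [show ((2:ℤ):ℝ) * π / 6 = π/3 by push_cast; ring, c2]; push_cast; ring
  · refine ⟨2, 0, ?_, by norm_num⟩
    rw [show ((3:ℤ):ℝ) * π / 6 = π/2 by push_cast; ring, Real.cos_pi_div_two]; push_cast; ring
  · refine ⟨1, 0, ?_, by norm_num⟩
    rw [show ((4:ℤ):ℝ) * π / 6 = π - π/3 by push_cast; ring, Real.cos_pi_sub, c2]; push_cast; ring
  · refine ⟨2, -1, ?_, by norm_num⟩
    rw [show ((5:ℤ):ℝ) * π / 6 = π - π/6 by push_cast; ring, Real.cos_pi_sub, c1]; push_cast; ring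
  · refine ⟨0, 0, ?_, by norm_num⟩
    rw [show ((6:ℤ):ℝ) * π / 6 = π by push_cast; ring, Real.cos_pi]; push_cast; ring
  · refine ⟨2, -1, ?_, by norm_num⟩
    rw [show ((7:ℤ):ℝ) * π / 6 = π + π/6 by push_cast; ring, cps, c1]; push_cast; ring
  · refine ⟨1, 0, ?_, by norm_num⟩
    rw [show ((8:ℤ):ℝ) * π / 6 = π + π/3 by push_cast; ring, cps, c2]; push_cast; ring
  · refine ⟨2, 0, ?_, by norm_num⟩
    rw [show ((9:ℤ):ℝ) * π / 6 = π + π/2 by push_cast; ring, cps, Real.cos_pi_div_two]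
    push_cast; ring
  · refine ⟨3, 0, ?_, by norm_num⟩
    rw [show ((10:ℤ):ℝ) * π / 6 = π + (π - π/3) by push_cast; ring, cps, Real.cos_pi_sub, c2]
    push_cast; ring
  · refine ⟨2, 1, ?_, by norm_num⟩
    rw [show ((11:ℤ):ℝ) * π / 6 = π + (π - π/6) by push_cast; ring, cps, Real.cos_pi_sub, c1]
    push_cast; ring


/-- If `k` is an odd positive integer, `κ, s ≥ 0` integers, and
`(√2)^κ · ((√6+√2)/2)^{k−2s} = 2cos(mπ/12)` for some integer `m`, then
`κ = 0` and `k − 2s = ±1`. -/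
theorem sqrt_two_pow_eq_two_cos (k : ℕ) (hk : Odd k) (hkpos : 0 < k)
    (κ s : ℕ) (m : ℤ)
    (h : Real.sqrt 2 ^ κ * ((Real.sqrt 6 + Real.sqrt 2) / 2) ^ ((k : ℤ) - 2 * s) =
      2 * Real.cos (m * Real.pi / 12)) :
    κ = 0 ∧ ((k : ℤ) - 2 * s = 1 ∨ (k : ℤ) - 2 * s = -1) := by
  have h6 : Real.sqrt 6 ^ 2 = 6 := Real.sq_sqrt (by norm_num)
  have h2 : Real.sqrt 2 ^ 2 = 2 := Real.sq_sqrt (by norm_num)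
  have h3 := sqrt3_sq
  have h62 : Real.sqrt 6 * Real.sqrt 2 = 2 * Real.sqrt 3 := by
    rw [show (6:ℝ) = 2*3 by norm_num, Real.sqrt_mul (by norm_num)]
    linear_combination Real.sqrt 3 * h2
  have halpha : ((Real.sqrt 6 + Real.sqrt 2)/2)^2 = 2 + Real.sqrt 3 := by
    linear_combination h6/4 + h2/4 + h62/2
  have halpha' : ((Real.sqrt 6 - Real.sqrt 2)/2)^2 = 2 - Real.sqrt 3 := by
    linear_combination h6/4 + h2/4 - h62/2
  have hainv : ((Real.sqrt 6 + Real.sqrt 2)/2)⁻¹ = (Real.sqrt 6 - Real.sqrt 2)/2 :=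
    inv_eq_of_mul_eq_one_right (by linear_combination h6/4 - h2/4)
  have hcsq : (2 * Real.cos (m * π / 12))^2 = 2 + 2 * Real.cos (m * π / 6) := by
    have hd := Real.cos_sq (m * π / 12)
    rw [show 2 * (m * π / 12) = m * π / 6 by ring] at hd
    linear_combination 4 * hd
  obtain ⟨u, v, huv, hcase⟩ := cos_cases m
  have hn : Odd ((k:ℤ) - 2*s) := by
    obtain ⟨j, hj⟩ := hk
    exact ⟨(j:ℤ) - s, by push_cast [hj]; ring⟩
  have h2k : 1 ≤ 2^κ := Nat.one_le_two_pow
  rcases lt_trichotomy ((k:ℤ) - 2*s) 0 with hlt | heq | hgt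
  · -- negative exponent
    obtain ⟨t, ht⟩ : ∃ t : ℕ, (k:ℤ) - 2*s = -(t:ℤ) := ⟨((k:ℤ) - 2*s).natAbs, by omega⟩
    have ht1 : 1 ≤ t := by omega
    rw [ht] at h
    rw [zpow_neg, zpow_natCast, ← inv_pow, hainv] at h
    have e1 : (Real.sqrt 2 ^ κ * ((Real.sqrt 6 - Real.sqrt 2)/2)^t)^2
        = 2^κ * (((ab t).1:ℝ) - (ab t).2 * Real.sqrt 3) := by
      rw [mul_pow, ← pow_mul, mul_comm κ 2, pow_mul, h2,
          ← pow_mul, mul_comm t 2, pow_mul, halpha', pow_neg_eq]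
    have hkey : (2:ℝ)^κ * (((ab t).1:ℝ) - (ab t).2 * Real.sqrt 3) = (u:ℝ) + v * Real.sqrt 3 := by
      rw [← e1, h, hcsq, huv]
    obtain ⟨hz1, hz2⟩ := int_sqrt3 (-(2^κ * (ab t).2) - v) (u - 2^κ * (ab t).1)
      (by push_cast; linear_combination hkey)
    have hb := ab_b t
    have hbk : (1:ℤ) ≤ 2^κ * (ab t).2 := by
      have : 0 < 2^κ * (ab t).2 := Nat.mul_pos (by positivity) (by omega)
      exact_mod_cast this
    have hv : v = -1 ∧ u = 2 := by
      rcases hcase with ⟨hu, hv⟩ | ⟨hu, hv⟩ | hv <;> omega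
    have hone : (2:ℤ)^κ * (ab t).2 = 1 := by omega
    have hone' : 2^κ * (ab t).2 = 1 := by exact_mod_cast hone
    have ha1 : 2^κ = 1 := Nat.eq_one_of_mul_eq_one_right hone'
    have hb1 : (ab t).2 = 1 := Nat.eq_one_of_mul_eq_one_left hone'
    have hk0 : κ = 0 := by
      by_contra hne
      have : 2 ≤ 2^κ := Nat.one_lt_two_pow (by omega)
      omega
    have ht' : t = 1 := by omega
    exact ⟨hk0, Or.inr (by omega)⟩
  · exfalso
    rw [heq] at hn
    rcases hn with ⟨j, hj⟩
    omega
  · -- positive exponent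
    obtain ⟨t, ht⟩ : ∃ t : ℕ, (k:ℤ) - 2*s = (t:ℤ) := ⟨((k:ℤ) - 2*s).natAbs, by omega⟩
    have ht1 : 1 ≤ t := by omega
    rw [ht, zpow_natCast] at h
    have e1 : (Real.sqrt 2 ^ κ * ((Real.sqrt 6 + Real.sqrt 2)/2)^t)^2
        = 2^κ * (((ab t).1:ℝ) + (ab t).2 * Real.sqrt 3) := by
      rw [mul_pow, ← pow_mul, mul_comm κ 2, pow_mul, h2,
          ← pow_mul, mul_comm t 2, pow_mul, halpha, pow_pos_eq]
    have hkey : (2:ℝ)^κ * (((ab t).1:ℝ) + (ab t).2 * Real.sqrt 3) = (u:ℝ) + v * Real.sqrt 3 := by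
      rw [← e1, h, hcsq, huv]
    obtain ⟨hz1, hz2⟩ := int_sqrt3 ((2^κ * (ab t).2) - v) (u - 2^κ * (ab t).1)
      (by push_cast; linear_combination hkey)
    have hb := ab_b t
    have hbk : (1:ℤ) ≤ 2^κ * (ab t).2 := by
      have : 0 < 2^κ * (ab t).2 := Nat.mul_pos (by positivity) (by omega)
      exact_mod_cast this
    have hv : v = 1 ∧ u = 2 := by
      rcases hcase with ⟨hu, hv⟩ | ⟨hu, hv⟩ | hv <;> omega
    have hone : (2:ℤ)^κ * (ab t).2 = 1 := by omega
    have hone' : 2^κ * (ab t).2 = 1 := by exact_mod_cast hone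
    have ha1 : 2^κ = 1 := Nat.eq_one_of_mul_eq_one_right hone'
    have hb1 : (ab t).2 = 1 := Nat.eq_one_of_mul_eq_one_left hone'
    have hk0 : κ = 0 := by
      by_contra hne
      have : 2 ≤ 2^κ := Nat.one_lt_two_pow (by omega)
      omega
    have ht' : t = 1 := by omega
    exact ⟨hk0, Or.inl (by omega)⟩
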